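/- When each of n agents (with distinct values, agent i being the i-th highest valued) is independently assigned to M or S with probability 1/2 each, the probability that the partition is balanced — i.e., agent 1 ∈ M, agent 2 ∈ S, and for every i ≥ 3 the number of the top i agents in S lies in [i/4, 3i/4] and similarly for M — is at least 0.169. -/

import Mathlib

/-- A subset `A ⊆ {0,…,n-1}` (the sample `S`; agents are indexed in
decreasing order of value, so agent `0` is the highest-valued) is *balanced*
if agent `0 ∉ A` (agent 1 is in the market `M`), agent `1 ∈ A` (agent 2 is in
the sample `S`), and for every `3 ≤ i ≤ n` the number of the top `i` agents in
`S` lies in `[i/4, 3i/4]`, and similarly for `M`. -/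
def BalancedPartition (n : ℕ) (A : Finset ℕ) : Prop :=
  0 ∉ A ∧ 1 ∈ A ∧
    ∀ i : ℕ, 3 ≤ i → i ≤ n →
      ((i : ℝ) / 4 ≤ ((A ∩ Finset.range i).card : ℝ) ∧
        ((A ∩ Finset.range i).card : ℝ) ≤ 3 * (i : ℝ) / 4) ∧
      ((i : ℝ) / 4 ≤ (((Finset.range i \ A).card : ℝ)) ∧
        (((Finset.range i \ A).card : ℝ)) ≤ 3 * (i : ℝ) / 4)

open Finset

noncomputable def cw : ℝ := 109 / 200

def Zw (B : Finset ℕ) (k : ℕ) : ℤ := 4 * ((B ∩ Finset.range k).card : ℤ) - k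

def sv (B : Finset ℕ) : ℕ → ℤ
  | 0 => 0
  | m+1 => if sv B m = -3 then -3 else Zw B (m+1)

lemma cw_pos : (0:ℝ) < cw := by norm_num [cw]

lemma card_inter_range_succ (B : Finset ℕ) (m : ℕ) :
    (B ∩ Finset.range (m+1)).card
      = (B ∩ Finset.range m).card + (if m ∈ B then 1 else 0) := by
  rw [Finset.range_add_one]
  by_cases h : m ∈ B
  · rw [Finset.inter_insert_of_mem h, Finset.card_insert_of_notMem (by simp), if_pos h]
  · rw [Finset.inter_insert_of_notMem h, if_neg h, Nat.add_zero]

lemma Zw_succ (B : Finset ℕ) (m : ℕ) :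
    Zw B (m+1) = Zw B m + (if m ∈ B then 3 else -1) := by
  simp only [Zw, card_inter_range_succ]
  by_cases h : m ∈ B <;> simp [h] <;> push_cast <;> ring

lemma sv_eq_or (B : Finset ℕ) (m : ℕ) : sv B m = -3 ∨ sv B m = Zw B m := by
  cases m with
  | zero => right; simp [sv, Zw]
  | succ m =>
    rw [sv]
    by_cases h : sv B m = -3
    · left; simp [h]
    · right; simp [h]

lemma sv_ne_ge (B : Finset ℕ) (m : ℕ) (h : sv B m ≠ -3) : -2 ≤ Zw B m := by
  induction m with
  | zero => simp [Zw]
  | succ m ih =>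
    have hm : sv B m ≠ -3 := by
      intro hh; apply h; rw [sv, if_pos hh]
    have h1 : -2 ≤ Zw B m := ih hm
    have h2 : sv B (m+1) = Zw B (m+1) := by rw [sv, if_neg hm]
    have h3 : Zw B (m+1) = Zw B m + (if m ∈ B then 3 else -1) := Zw_succ B m
    have h4 : -3 ≤ Zw B (m+1) := by
      rw [h3]; split <;> omega
    have h5 : Zw B (m+1) ≠ -3 := h2 ▸ h
    omega

lemma sv_mono (B : Finset ℕ) (m m' : ℕ) (hmm : m ≤ m') (h : sv B m = -3) :
    sv B m' = -3 := by
  induction m' with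
  | zero => exact (Nat.le_zero.mp hmm) ▸ h
  | succ k ih =>
    rcases Nat.lt_or_ge m (k+1) with hk | hk
    · have : sv B k = -3 := ih (by omega)
      rw [sv, if_pos this]
    · have : m = k + 1 := by omega
      exact this ▸ h

lemma sv_of_Zw_le (B : Finset ℕ) (k : ℕ) (h : Zw B k ≤ -3) : sv B k = -3 := by
  by_contra hc
  have := sv_ne_ge B k hc
  omega

lemma Zw_insert (B : Finset ℕ) (m k : ℕ) (hk : k ≤ m) :
    Zw (insert m B) k = Zw B k := by
  have : insert m B ∩ Finset.range k = B ∩ Finset.range k := by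
    ext x
    simp only [Finset.mem_inter, Finset.mem_insert, Finset.mem_range]
    constructor
    · rintro ⟨h1 | h1, h2⟩
      · omega
      · exact ⟨h1, h2⟩
    · rintro ⟨h1, h2⟩; exact ⟨Or.inr h1, h2⟩
  simp [Zw, this]

lemma sv_insert (B : Finset ℕ) (m k : ℕ) (hk : k ≤ m) :
    sv (insert m B) k = sv B k := by
  induction k with
  | zero => simp [sv]
  | succ j ih =>
    rw [sv, sv, ih (by omega), Zw_insert B m (j+1) hk]

lemma key_ineq (z : ℤ) : cw ^ (z - 1) + cw ^ (z + 3) ≤ 2 * cw ^ z := by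
  have hc : (0:ℝ) < cw := cw_pos
  have h1 : cw ^ (z - 1) * (1 + cw ^ (4:ℕ)) ≤ cw ^ (z - 1) * (2 * cw) := by
    apply mul_le_mul_of_nonneg_left _ (le_of_lt (zpow_pos hc _))
    norm_num [cw]
  calc cw ^ (z - 1) + cw ^ (z + 3)
      = cw ^ (z - 1) * (1 + cw ^ (4:ℕ)) := by
        rw [mul_add, mul_one, ← zpow_natCast cw 4, ← zpow_add₀ (ne_of_gt hc)]
        norm_num
        congr 1
        omega
    _ ≤ cw ^ (z - 1) * (2 * cw) := h1
    _ = 2 * cw ^ z := by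
        rw [show cw ^ (z-1) * (2 * cw) = 2 * (cw ^ (z-1) * cw ^ (1:ℤ)) by
          rw [zpow_one]; ring, ← zpow_add₀ (ne_of_gt hc)]
        norm_num

lemma sum_sv_le (m : ℕ) :
    ∑ B ∈ (Finset.range m).powerset, cw ^ (sv B m) ≤ 2 ^ m := by
  induction m with
  | zero => simp [sv]
  | succ m ih =>
    have hmem : m ∉ Finset.range m := by simp
    rw [Finset.range_add_one, Finset.powerset_insert, Finset.sum_union, Finset.sum_image]
    · have step : ∀ B ∈ (Finset.range m).powerset,
          cw ^ (sv B (m+1)) + cw ^ (sv (insert m B) (m+1)) ≤ 2 * cw ^ (sv B m) := by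
        intro B hB
        have hmB : m ∉ B := fun h => hmem (Finset.mem_powerset.mp hB h)
        by_cases hsv : sv B m = -3
        · have h1 : sv B (m+1) = -3 := by rw [sv, if_pos hsv]
          have h2 : sv (insert m B) (m+1) = -3 := by
            rw [sv, if_pos (by rw [sv_insert B m m le_rfl]; exact hsv)]
          rw [h1, h2, hsv]; ring_nf; rfl
        · have h1 : sv B (m+1) = Zw B m - 1 := by
            rw [sv, if_neg hsv, Zw_succ, if_neg hmB]; ring
          have h2 : sv (insert m B) (m+1) = Zw B m + 3 := by
            rw [sv, if_neg (by rw [sv_insert B m m le_rfl]; exact hsv),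
              Zw_succ, if_pos (Finset.mem_insert_self m B), Zw_insert B m m le_rfl]
          have h3 : sv B m = Zw B m := (sv_eq_or B m).resolve_left hsv
          rw [h1, h2, h3]
          exact key_ineq _
      calc ∑ B ∈ (Finset.range m).powerset, cw ^ (sv B (m+1))
            + ∑ B ∈ (Finset.range m).powerset, cw ^ (sv (insert m B) (m+1))
          = ∑ B ∈ (Finset.range m).powerset,
              (cw ^ (sv B (m+1)) + cw ^ (sv (insert m B) (m+1))) := by
            rw [Finset.sum_add_distrib]
        _ ≤ ∑ B ∈ (Finset.range m).powerset, 2 * cw ^ (sv B m) :=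
            Finset.sum_le_sum step
        _ = 2 * ∑ B ∈ (Finset.range m).powerset, cw ^ (sv B m) := by
            rw [Finset.mul_sum]
        _ ≤ 2 * 2 ^ m := by linarith
        _ = 2 ^ (m+1) := by ring
    · intro B hB C hC hBC
      have hmB : m ∉ B := fun h => hmem (Finset.mem_powerset.mp hB h)
      have hmC : m ∉ C := fun h => hmem (Finset.mem_powerset.mp hC h)
      have := congrArg (Finset.erase · m) hBC
      simpa [Finset.erase_insert, hmB, hmC] using this
    · rw [Finset.disjoint_left]
      intro B hB hB2
      rcases Finset.mem_image.mp hB2 with ⟨C, hC, hCB⟩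
      have : m ∈ B := hCB ▸ Finset.mem_insert_self m C
      exact hmem (Finset.mem_powerset.mp hB this)

lemma ruin_count (m : ℕ) :
    (((Finset.range m).powerset.filter (fun B => sv B m = -3)).card : ℝ)
      ≤ cw ^ 3 * 2 ^ m := by
  have hc : (0:ℝ) < cw := cw_pos
  have h1 : (((Finset.range m).powerset.filter (fun B => sv B m = -3)).card : ℝ)
      * cw ^ (-3 : ℤ) ≤ 2 ^ m := by
    calc (((Finset.range m).powerset.filter (fun B => sv B m = -3)).card : ℝ)
          * cw ^ (-3 : ℤ)
        = ∑ B ∈ (Finset.range m).powerset.filter (fun B => sv B m = -3),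
            cw ^ (sv B m) := by
          rw [Finset.sum_congr rfl (fun B hB => by
            rw [(Finset.mem_filter.mp hB).2]), Finset.sum_const, nsmul_eq_mul]
      _ ≤ ∑ B ∈ (Finset.range m).powerset, cw ^ (sv B m) := by
          apply Finset.sum_le_sum_of_subset_of_nonneg (Finset.filter_subset _ _)
          intro B _ _
          exact le_of_lt (zpow_pos hc _)
      _ ≤ 2 ^ m := sum_sv_le m
  have h2 : cw ^ (-3:ℤ) = (cw ^ 3)⁻¹ := by
    rw [zpow_neg, zpow_ofNat]
  have h3 : (0:ℝ) < cw ^ 3 := by positivity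
  rw [h2] at h1
  calc (((Finset.range m).powerset.filter (fun B => sv B m = -3)).card : ℝ)
      = (((Finset.range m).powerset.filter (fun B => sv B m = -3)).card : ℝ)
        * (cw ^3)⁻¹ * cw ^ 3 := by field_simp
    _ ≤ 2 ^ m * cw ^ 3 := by
        apply mul_le_mul_of_nonneg_right h1 (le_of_lt h3)
    _ = cw ^ 3 * 2 ^ m := by ring

lemma card_sdiff_range (A : Finset ℕ) (i : ℕ) :
    (Finset.range i \ A).card = i - (A ∩ Finset.range i).card := by
  have h : Finset.range i \ A = Finset.range i \ (A ∩ Finset.range i) := by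
    ext x; simp only [Finset.mem_sdiff, Finset.mem_inter]; tauto
  rw [h, Finset.card_sdiff_of_subset Finset.inter_subset_right, Finset.card_range]

lemma card_inter_le (A : Finset ℕ) (i : ℕ) :
    (A ∩ Finset.range i).card ≤ i := by
  have := Finset.card_le_card (Finset.inter_subset_right (s₁ := A) (s₂ := Finset.range i))
  simpa using this

/-- shift map to the free coordinates -/
def psi (A : Finset ℕ) : Finset ℕ :=
  (A.filter (fun x => 2 ≤ x)).image (fun x => x - 2)

/-- complement map -/
def phi (n : ℕ) (A : Finset ℕ) : Finset ℕ :=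
  insert 1 ((Finset.range n \ A).erase 0)

lemma psi_recover (A : Finset ℕ) (h0 : 0 ∉ A) (h1 : 1 ∈ A) :
    insert 1 ((psi A).image (fun x => x + 2)) = A := by
  ext x
  simp only [Finset.mem_insert, Finset.mem_image, psi, Finset.mem_filter]
  constructor
  · rintro (rfl | ⟨y, ⟨a, ⟨ha, ha2⟩, rfl⟩, rfl⟩)
    · exact h1
    · have : a - 2 + 2 = a := by omega
      rwa [this]
  · intro hx
    rcases Nat.lt_or_ge x 2 with h | h
    · left
      have : x ≠ 0 := fun hh => h0 (hh ▸ hx)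
      omega
    · right
      exact ⟨x - 2, ⟨x, ⟨hx, h⟩, rfl⟩, by omega⟩

lemma psi_inter_range (A : Finset ℕ) (h0 : 0 ∉ A) (h1 : 1 ∈ A) (k : ℕ) :
    ((psi A) ∩ Finset.range k).card = (A ∩ Finset.range (k+2)).card - 1 ∧
      1 ≤ (A ∩ Finset.range (k+2)).card := by
  have hmem : (1 : ℕ) ∈ A ∩ Finset.range (k+2) := by
    simp [h1]
  constructor
  · have himg : (psi A) ∩ Finset.range k
        = ((A ∩ Finset.range (k+2)).erase 1).image (fun x => x - 2) := by
      ext x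
      simp only [psi, Finset.mem_inter, Finset.mem_image, Finset.mem_filter,
        Finset.mem_range, Finset.mem_erase]
      constructor
      · rintro ⟨⟨a, ⟨ha, ha2⟩, rfl⟩, hlt⟩
        exact ⟨a, ⟨by omega, ha, by omega⟩, rfl⟩
      · rintro ⟨a, ⟨hne, ha, hlt⟩, rfl⟩
        have ha0 : a ≠ 0 := fun hh => h0 (hh ▸ ha)
        exact ⟨⟨a, ⟨ha, by omega⟩, rfl⟩, by omega⟩
    rw [himg, Finset.card_image_of_injOn, Finset.card_erase_of_mem hmem]
    intro a ha b hb hab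
    simp only [Finset.mem_coe, Finset.mem_erase, Finset.mem_inter] at ha hb
    have ha0 : a ≠ 0 := fun hh => h0 (hh ▸ ha.2.1)
    have hb0 : b ≠ 0 := fun hh => h0 (hh ▸ hb.2.1)
    simp only at hab
    omega
  · exact Finset.one_le_card.mpr ⟨1, hmem⟩

lemma psi_mem_powerset {n : ℕ} (hn : 2 ≤ n) {A : Finset ℕ}
    (hA : A ⊆ Finset.range n) : psi A ∈ (Finset.range (n-2)).powerset := by
  rw [Finset.mem_powerset]
  intro x hx
  simp only [psi, Finset.mem_image, Finset.mem_filter] at hx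
  rcases hx with ⟨a, ⟨ha, ha2⟩, rfl⟩
  have := Finset.mem_range.mp (hA ha)
  simp only [Finset.mem_range]
  omega

lemma psi_injOn {A B : Finset ℕ}
    (hA0 : 0 ∉ A) (hA1 : 1 ∈ A) (hB0 : 0 ∉ B) (hB1 : 1 ∈ B)
    (h : psi A = psi B) : A = B := by
  rw [← psi_recover A hA0 hA1, ← psi_recover B hB0 hB1, h]

lemma card_P2 {n : ℕ} (hn : 2 ≤ n) :
    (((Finset.range n).powerset.filter (fun A => 0 ∉ A ∧ 1 ∈ A)).card)
      = 2 ^ (n - 2) := by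
  rw [← Finset.card_range (n-2), ← Finset.card_powerset]
  apply Finset.card_bij (fun A _ => psi A)
  · intro A hA
    simp only [Finset.mem_filter, Finset.mem_powerset] at hA
    exact psi_mem_powerset hn hA.1
  · intro A hA B hB h
    simp only [Finset.mem_filter, Finset.mem_powerset] at hA hB
    exact psi_injOn hA.2.1 hA.2.2 hB.2.1 hB.2.2 h
  · intro B hB
    rw [Finset.mem_powerset] at hB
    refine ⟨insert 1 (B.image (fun x => x + 2)), ?_, ?_⟩
    · simp only [Finset.mem_filter, Finset.mem_powerset]
      refine ⟨?_, ?_, Finset.mem_insert_self 1 _⟩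
      · intro x hx
        simp only [Finset.mem_insert, Finset.mem_image] at hx
        simp only [Finset.mem_range]
        rcases hx with rfl | ⟨y, hy, rfl⟩
        · omega
        · have := Finset.mem_range.mp (hB hy)
          omega
      · simp only [Finset.mem_insert, Finset.mem_image]
        push_neg
        exact ⟨by omega, fun y _ => by omega⟩
    · ext x
      simp only [psi, Finset.mem_image, Finset.mem_filter, Finset.mem_insert]
      constructor
      · rintro ⟨a, ⟨rfl | ⟨y, hy, rfl⟩, h2⟩, rfl⟩
        · omega
        · simpa [Nat.add_sub_cancel] using hy
      · intro hx
        exact ⟨x + 2, ⟨Or.inr ⟨x, hx, rfl⟩, by omega⟩, by omega⟩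

lemma phi_card_inter {n : ℕ} {A : Finset ℕ} (hA : A ⊆ Finset.range n)
    (h0 : 0 ∉ A) (h1 : 1 ∈ A) {i : ℕ} (h2i : 2 ≤ i) (hin : i ≤ n) :
    ((phi n A ∩ Finset.range i).card) = i - (A ∩ Finset.range i).card := by
  have hset : phi n A ∩ Finset.range i
      = insert 1 ((Finset.range i \ A).erase 0) := by
    ext x
    simp only [phi, Finset.mem_inter, Finset.mem_insert, Finset.mem_erase,
      Finset.mem_sdiff, Finset.mem_range]
    constructor
    · rintro ⟨rfl | ⟨hx0, hxn, hxA⟩, hxi⟩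
      · left; rfl
      · right; exact ⟨hx0, hxi, hxA⟩
    · rintro (rfl | ⟨hx0, hxi, hxA⟩)
      · exact ⟨Or.inl rfl, by omega⟩
      · exact ⟨Or.inr ⟨hx0, by omega, hxA⟩, hxi⟩
  have h1not : (1 : ℕ) ∉ (Finset.range i \ A).erase 0 := by
    simp [h1]
  have h0mem : (0 : ℕ) ∈ Finset.range i \ A := by
    simp only [Finset.mem_sdiff, Finset.mem_range]
    exact ⟨by omega, h0⟩
  rw [hset, Finset.card_insert_of_notMem h1not, Finset.card_erase_of_mem h0mem,
    card_sdiff_range]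
  have hle := card_inter_le A i
  have hge : 1 ≤ (Finset.range i \ A).card := Finset.one_le_card.mpr ⟨0, h0mem⟩
  rw [card_sdiff_range] at hge
  omega

lemma phi_mem_P2 {n : ℕ} (hn : 2 ≤ n) {A : Finset ℕ} (hA : A ⊆ Finset.range n) :
    phi n A ∈ (Finset.range n).powerset.filter (fun A => 0 ∉ A ∧ 1 ∈ A) := by
  simp only [Finset.mem_filter, Finset.mem_powerset, phi]
  refine ⟨?_, ?_, Finset.mem_insert_self 1 _⟩
  · intro x hx
    simp only [Finset.mem_insert, Finset.mem_erase, Finset.mem_sdiff,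
      Finset.mem_range] at hx
    simp only [Finset.mem_range]
    rcases hx with rfl | ⟨_, ⟨h, _⟩⟩
    · omega
    · exact h
  · simp

lemma phi_phi {n : ℕ} {A : Finset ℕ} (hA : A ⊆ Finset.range n)
    (h0 : 0 ∉ A) (h1 : 1 ∈ A) : phi n (phi n A) = A := by
  ext x
  simp only [phi, Finset.mem_insert, Finset.mem_erase, Finset.mem_sdiff,
    Finset.mem_range]
  constructor
  · rintro (rfl | ⟨hx0, hxn, hx⟩)
    · exact h1
    · push_neg at hx
      exact hx.2 hx0 hxn
  · intro hx
    have hxn : x < n := Finset.mem_range.mp (hA hx)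
    have hx0 : x ≠ 0 := fun h => h0 (h ▸ hx)
    rcases eq_or_ne x 1 with rfl | hx1
    · left; rfl
    · right
      refine ⟨hx0, hxn, ?_⟩
      push_neg
      exact ⟨hx1, fun _ _ => hx⟩

lemma balanced_of_not_bad {n : ℕ} {A : Finset ℕ} (hA : A ⊆ Finset.range n)
    (h0 : 0 ∉ A) (h1 : 1 ∈ A)
    (h : ∀ i, 3 ≤ i → i ≤ n → (i:ℤ) ≤ 4 * ((A ∩ Finset.range i).card : ℤ) ∧
        4 * ((A ∩ Finset.range i).card : ℤ) ≤ 3 * i) :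
    BalancedPartition n A := by
  refine ⟨h0, h1, fun i h3 hin => ?_⟩
  obtain ⟨hl, hr⟩ := h i h3 hin
  have hc := card_inter_le A i
  have hsd := card_sdiff_range A i
  have hlr : (i:ℝ) ≤ 4 * ((A ∩ Finset.range i).card : ℝ) := by exact_mod_cast hl
  have hrr : 4 * ((A ∩ Finset.range i).card : ℝ) ≤ 3 * i := by exact_mod_cast hr
  have hsdr : ((Finset.range i \ A).card : ℝ)
      = (i : ℝ) - ((A ∩ Finset.range i).card : ℝ) := by
    rw [hsd, Nat.cast_sub hc]
  refine ⟨⟨by linarith, by linarith⟩, ⟨by rw [hsdr]; linarith, by rw [hsdr]; linarith⟩⟩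

/-- Balanced Sampling Lemma: when each of `n ≥ 2` agents is assigned to the
market or the sample independently with probability `1/2` each (equivalently,
the sample `A` is uniform over subsets of `{0,…,n-1}`), the partition is
balanced with probability at least `0.169`. -/
theorem balanced_sampling (n : ℕ) (hn : 2 ≤ n) :
    (0.169 : ℝ) ≤
      (Nat.card {A : Finset ℕ // A ⊆ Finset.range n ∧ BalancedPartition n A} : ℝ)
        / 2 ^ n := by
  set P2 := (Finset.range n).powerset.filter (fun A => 0 ∉ A ∧ 1 ∈ A) with hP2
  letI iL : DecidablePred
      (fun A : Finset ℕ => ∃ i ∈ Finset.Icc 3 n, 4 * (A ∩ Finset.range i).card < i) :=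
    fun _ => by infer_instance
  letI iH : DecidablePred
      (fun A : Finset ℕ => ∃ i ∈ Finset.Icc 3 n, 3 * i < 4 * (A ∩ Finset.range i).card) :=
    fun _ => by infer_instance
  set BadL := P2.filter
    (fun A => ∃ i ∈ Finset.Icc 3 n, 4 * (A ∩ Finset.range i).card < i) with hBadL
  set BadH := P2.filter
    (fun A => ∃ i ∈ Finset.Icc 3 n, 3 * i < 4 * (A ∩ Finset.range i).card) with hBadH
  letI instD : DecidablePred (BalancedPartition n) := Classical.decPred _
  set G := (Finset.range n).powerset.filter (fun A => BalancedPartition n A) with hG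
  -- Nat.card equals G.card
  have hset : {A : Finset ℕ | A ⊆ Finset.range n ∧ BalancedPartition n A} = ↑G := by
    ext A
    simp [hG, Finset.mem_coe, Finset.mem_filter, Finset.mem_powerset]
  have hcard : Nat.card {A : Finset ℕ // A ⊆ Finset.range n ∧ BalancedPartition n A}
      = G.card := by
    have he : {A : Finset ℕ // A ⊆ Finset.range n ∧ BalancedPartition n A}
        ≃ {A : Finset ℕ // A ∈ (↑G : Set (Finset ℕ))} :=
      Equiv.subtypeEquivRight (fun A => by
        rw [← hset]; exact Iff.rfl)
    rw [Nat.card_congr he, Nat.card_coe_set_eq, Set.ncard_coe_finset]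
  -- non-bad implies good
  have hsub : P2 \ (BadL ∪ BadH) ⊆ G := by
    intro A hA
    rw [Finset.mem_sdiff, Finset.mem_union] at hA
    obtain ⟨hAP2, hnb⟩ := hA
    push_neg at hnb
    obtain ⟨hnL, hnH⟩ := hnb
    rw [hP2, Finset.mem_filter, Finset.mem_powerset] at hAP2
    obtain ⟨hApow, h0, h1⟩ := hAP2
    rw [hG, Finset.mem_filter, Finset.mem_powerset]
    refine ⟨hApow, balanced_of_not_bad hApow h0 h1 ?_⟩
    intro i h3 hin
    constructor
    · by_contra hc
      apply hnL
      rw [hBadL, Finset.mem_filter]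
      exact ⟨by rw [hP2, Finset.mem_filter, Finset.mem_powerset]; exact ⟨hApow, h0, h1⟩,
        ⟨i, Finset.mem_Icc.mpr ⟨h3, hin⟩, by omega⟩⟩
    · by_contra hc
      apply hnH
      rw [hBadH, Finset.mem_filter]
      exact ⟨by rw [hP2, Finset.mem_filter, Finset.mem_powerset]; exact ⟨hApow, h0, h1⟩,
        ⟨i, Finset.mem_Icc.mpr ⟨h3, hin⟩, by omega⟩⟩
  -- card inequality
  have hcount : P2.card ≤ G.card + BadL.card + BadH.card := by
    calc P2.card ≤ (P2 \ (BadL ∪ BadH)).card + (BadL ∪ BadH).card :=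
          Finset.card_le_card_sdiff_add_card
      _ ≤ G.card + (BadL.card + BadH.card) :=
          Nat.add_le_add (Finset.card_le_card hsub) (Finset.card_union_le _ _)
      _ = G.card + BadL.card + BadH.card := by ring
  -- BadH ≤ BadL via phi
  have hH : BadH.card ≤ BadL.card := by
    apply Finset.card_le_card_of_injOn (phi n)
    · intro A hA
      rw [hBadH, Finset.mem_coe, Finset.mem_filter] at hA
      obtain ⟨hAP2, i, hi, hviol⟩ := hA
      rw [hP2, Finset.mem_filter, Finset.mem_powerset] at hAP2
      obtain ⟨hApow, h0, h1⟩ := hAP2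
      obtain ⟨h3, hin⟩ := Finset.mem_Icc.mp hi
      rw [hBadL, Finset.mem_coe, Finset.mem_filter]
      refine ⟨by rw [hP2]; exact phi_mem_P2 hn hApow, i, hi, ?_⟩
      rw [phi_card_inter hApow h0 h1 (by omega) hin]
      have hc := card_inter_le A i
      omega
    · intro A hA B hB hAB
      rw [Finset.mem_coe] at hA hB
      rw [hBadH, Finset.mem_filter, hP2, Finset.mem_filter, Finset.mem_powerset] at hA hB
      rw [← phi_phi hA.1.1 hA.1.2.1 hA.1.2.2, ← phi_phi hB.1.1 hB.1.2.1 hB.1.2.2, hAB]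
  -- BadL ≤ ruin count via psi
  have hL : BadL.card
      ≤ ((Finset.range (n-2)).powerset.filter (fun B => sv B (n-2) = -3)).card := by
    apply Finset.card_le_card_of_injOn psi
    · intro A hA
      rw [hBadL, Finset.mem_coe, Finset.mem_filter] at hA
      obtain ⟨hAP2, i, hi, hviol⟩ := hA
      rw [hP2, Finset.mem_filter, Finset.mem_powerset] at hAP2
      obtain ⟨hApow, h0, h1⟩ := hAP2
      obtain ⟨h3, hin⟩ := Finset.mem_Icc.mp hi
      rw [Finset.mem_coe, Finset.mem_filter]
      refine ⟨psi_mem_powerset hn hApow, ?_⟩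
      obtain ⟨hceq, hcge⟩ := psi_inter_range A h0 h1 (i - 2)
      have hi2 : i - 2 + 2 = i := by omega
      rw [hi2] at hceq hcge
      have hZ : Zw (psi A) (i-2) ≤ -3 := by
        simp only [Zw, hceq]
        omega
      exact sv_mono (psi A) (i-2) (n-2) (by omega) (sv_of_Zw_le (psi A) (i-2) hZ)
    · intro A hA B hB hAB
      rw [Finset.mem_coe] at hA hB
      rw [hBadL, Finset.mem_filter, hP2, Finset.mem_filter, Finset.mem_powerset] at hA hB
      exact psi_injOn hA.1.2.1 hA.1.2.2 hB.1.2.1 hB.1.2.2 hAB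
  -- put it together over ℝ
  have hP2card : P2.card = 2 ^ (n-2) := card_P2 hn
  have hruin := ruin_count (n-2)
  have hGreal : (2:ℝ) ^ (n-2) ≤ (G.card : ℝ) + 2 * (cw ^ 3 * 2 ^ (n-2)) := by
    have h1 : ((P2.card : ℕ) : ℝ) ≤ (G.card : ℝ) + (BadL.card : ℝ) + (BadH.card : ℝ) := by
      exact_mod_cast hcount
    have h2 : ((BadL.card : ℕ) : ℝ) ≤ cw ^ 3 * 2 ^ (n-2) := by
      refine le_trans ?_ hruin
      exact_mod_cast hL
    have h3 : ((BadH.card : ℕ) : ℝ) ≤ cw ^ 3 * 2 ^ (n-2) := by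
      refine le_trans ?_ h2
      exact_mod_cast hH
    have h4 : ((P2.card : ℕ) : ℝ) = (2:ℝ) ^ (n-2) := by
      rw [hP2card]; push_cast; ring
    linarith
  rw [hcard]
  rw [le_div_iff₀ (by positivity : (0:ℝ) < 2 ^ n)]
  have hpow : (2:ℝ) ^ (n-2) * 4 = 2 ^ n := by
    rw [show (4:ℝ) = 2^2 by norm_num, ← pow_add, show n - 2 + 2 = n from by omega]
  rw [← hpow]
  have hcw : (0.169 : ℝ) * 4 ≤ 1 - 2 * cw ^ 3 := by norm_num [cw]
  have hp : (0:ℝ) < (2:ℝ) ^ (n-2) := by positivity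
  nlinarith [hGreal, hp, hcw]
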